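/- For every b ∈ ℂ, the subspace h_b = ⟨e_0 + b e_1, e_2, e_3, …, e_12⟩ of f_13 is an ideal of codimension 1, and h_b is a filiform Lie algebra: its lower central series satisfies dim h_b^i = 11 − i for 1 ≤ i ≤ 11. -/

import Mathlib

open scoped BigOperators

/-- Structure constants of the 13-dimensional filiform Lie algebra `f₁₃`:
`f13SC i j k` is the coefficient of `e_k` in `⁅e_i, e_j⁆` for `i < j`
(and `0` otherwise; the full antisymmetric constants are obtained below). -/
noncomputable def f13SC : ℕ → ℕ → ℕ → ℂ
  | 0, j, k => if 1 ≤ j ∧ j ≤ 11 ∧ k = j + 1 then 1 else 0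
  | 1, 2, 4 => 1
  | 1, 3, 5 => 1
  | 1, 4, 6 => 9/10
  | 1, 4, 8 => -1
  | 1, 5, 7 => 4/5
  | 1, 5, 9 => -2
  | 1, 6, 8 => 5/7
  | 1, 6, 10 => -335/126
  | 1, 6, 12 => 22105/15246
  | 1, 7, 9 => 9/14
  | 1, 7, 11 => -125/42
  | 1, 8, 10 => 7/12
  | 1, 8, 12 => -4421/1452
  | 1, 9, 11 => 8/15
  | 1, 10, 12 => 27/55
  | 2, 3, 6 => 1/10
  | 2, 3, 8 => 1
  | 2, 4, 7 => 1/10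
  | 2, 4, 9 => 1
  | 2, 5, 8 => 3/35
  | 2, 5, 10 => 83/126
  | 2, 5, 12 => -22105/15246
  | 2, 6, 9 => 1/14
  | 2, 6, 11 => 20/63
  | 2, 7, 10 => 5/84
  | 2, 7, 12 => 697/10164
  | 2, 8, 11 => 1/20
  | 2, 9, 12 => 7/165
  | 3, 4, 8 => 1/70
  | 3, 4, 10 => 43/126
  | 3, 4, 12 => 22105/15246
  | 3, 5, 9 => 1/70
  | 3, 5, 11 => 43/126
  | 3, 6, 10 => 1/84
  | 3, 6, 12 => 7589/30492
  | 3, 7, 11 => 1/105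
  | 3, 8, 12 => 1/132
  | 4, 5, 10 => 1/420
  | 4, 5, 12 => 313/3388
  | 4, 6, 11 => 1/420
  | 4, 7, 12 => 3/1540
  | 5, 6, 12 => 1/2310
  | _, _, _ => 0

/-- The full (antisymmetrized) structure constants of `f₁₃`. -/
noncomputable def f13C (i j k : Fin 13) : ℂ :=
  f13SC i j k - f13SC j i k
lemma f13SC_z {i j k : ℕ} (hi : 1 ≤ i) (hk : k < i + j + 1) : f13SC i j k = 0 := by
  rcases i with _|_|_|_|_|_|i
  · omega
  · rcases j with _|_|_|_|_|_|_|_|_|_|_|j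
    · rfl
    · rfl
    · rcases k with _|_|_|_|k
      · rfl
      · rfl
      · rfl
      · rfl
      · omega
    · rcases k with _|_|_|_|_|k
      · rfl
      · rfl
      · rfl
      · rfl
      · rfl
      · omega
    · rcases k with _|_|_|_|_|_|k
      · rfl
      · rfl
      · rfl
      · rfl
      · rfl
      · rfl
      · omega
    · rcases k with _|_|_|_|_|_|_|k
      · rfl
      · rfl
      · rfl
      · rfl
      · rfl
      · rfl
      · rfl
      · omega
    · rcases k with _|_|_|_|_|_|_|_|k
      · rfl
      · rfl
      · rfl
      · rfl
      · rfl
      · rfl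
      · rfl
      · rfl
      · omega
    · rcases k with _|_|_|_|_|_|_|_|_|k
      · rfl
      · rfl
      · rfl
      · rfl
      · rfl
      · rfl
      · rfl
      · rfl
      · rfl
      · omega
    · rcases k with _|_|_|_|_|_|_|_|_|_|k
      · rfl
      · rfl
      · rfl
      · rfl
      · rfl
      · rfl
      · rfl
      · rfl
      · rfl
      · rfl
      · omega
    · rcases k with _|_|_|_|_|_|_|_|_|_|_|k
      · rfl
      · rfl
      · rfl
      · rfl
      · rfl
      · rfl
      · rfl
      · rfl
      · rfl
      · rfl
      · rfl
      · omega
    · rcases k with _|_|_|_|_|_|_|_|_|_|_|_|k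
      · rfl
      · rfl
      · rfl
      · rfl
      · rfl
      · rfl
      · rfl
      · rfl
      · rfl
      · rfl
      · rfl
      · rfl
      · omega
    · rfl
  · rcases j with _|_|_|_|_|_|_|_|_|_|j
    · rfl
    · rfl
    · rfl
    · rcases k with _|_|_|_|_|_|k
      · rfl
      · rfl
      · rfl
      · rfl
      · rfl
      · rfl
      · omega
    · rcases k with _|_|_|_|_|_|_|k
      · rfl
      · rfl
      · rfl
      · rfl
      · rfl
      · rfl
      · rfl
      · omega
    · rcases k with _|_|_|_|_|_|_|_|k
      · rfl
      · rfl
      · rfl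
      · rfl
      · rfl
      · rfl
      · rfl
      · rfl
      · omega
    · rcases k with _|_|_|_|_|_|_|_|_|k
      · rfl
      · rfl
      · rfl
      · rfl
      · rfl
      · rfl
      · rfl
      · rfl
      · rfl
      · omega
    · rcases k with _|_|_|_|_|_|_|_|_|_|k
      · rfl
      · rfl
      · rfl
      · rfl
      · rfl
      · rfl
      · rfl
      · rfl
      · rfl
      · rfl
      · omega
    · rcases k with _|_|_|_|_|_|_|_|_|_|_|k
      · rfl
      · rfl
      · rfl
      · rfl
      · rfl
      · rfl
      · rfl
      · rfl
      · rfl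
      · rfl
      · rfl
      · omega
    · rcases k with _|_|_|_|_|_|_|_|_|_|_|_|k
      · rfl
      · rfl
      · rfl
      · rfl
      · rfl
      · rfl
      · rfl
      · rfl
      · rfl
      · rfl
      · rfl
      · rfl
      · omega
    · rfl
  · rcases j with _|_|_|_|_|_|_|_|_|j
    · rfl
    · rfl
    · rfl
    · rfl
    · rcases k with _|_|_|_|_|_|_|_|k
      · rfl
      · rfl
      · rfl
      · rfl
      · rfl
      · rfl
      · rfl
      · rfl
      · omega
    · rcases k with _|_|_|_|_|_|_|_|_|k
      · rfl
      · rfl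
      · rfl
      · rfl
      · rfl
      · rfl
      · rfl
      · rfl
      · rfl
      · omega
    · rcases k with _|_|_|_|_|_|_|_|_|_|k
      · rfl
      · rfl
      · rfl
      · rfl
      · rfl
      · rfl
      · rfl
      · rfl
      · rfl
      · rfl
      · omega
    · rcases k with _|_|_|_|_|_|_|_|_|_|_|k
      · rfl
      · rfl
      · rfl
      · rfl
      · rfl
      · rfl
      · rfl
      · rfl
      · rfl
      · rfl
      · rfl
      · omega
    · rcases k with _|_|_|_|_|_|_|_|_|_|_|_|k
      · rfl
      · rfl
      · rfl
      · rfl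
      · rfl
      · rfl
      · rfl
      · rfl
      · rfl
      · rfl
      · rfl
      · rfl
      · omega
    · rfl
  · rcases j with _|_|_|_|_|_|_|_|j
    · rfl
    · rfl
    · rfl
    · rfl
    · rfl
    · rcases k with _|_|_|_|_|_|_|_|_|_|k
      · rfl
      · rfl
      · rfl
      · rfl
      · rfl
      · rfl
      · rfl
      · rfl
      · rfl
      · rfl
      · omega
    · rcases k with _|_|_|_|_|_|_|_|_|_|_|k
      · rfl
      · rfl
      · rfl
      · rfl
      · rfl
      · rfl
      · rfl
      · rfl
      · rfl
      · rfl
      · rfl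
      · omega
    · rcases k with _|_|_|_|_|_|_|_|_|_|_|_|k
      · rfl
      · rfl
      · rfl
      · rfl
      · rfl
      · rfl
      · rfl
      · rfl
      · rfl
      · rfl
      · rfl
      · rfl
      · omega
    · rfl
  · rcases j with _|_|_|_|_|_|_|j
    · rfl
    · rfl
    · rfl
    · rfl
    · rfl
    · rfl
    · rcases k with _|_|_|_|_|_|_|_|_|_|_|_|k
      · rfl
      · rfl
      · rfl
      · rfl
      · rfl
      · rfl
      · rfl
      · rfl
      · rfl
      · rfl
      · rfl
      · rfl
      · omega
    · rfl
  · rfl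

lemma f13SC_zeroleft (j k : ℕ) :
    f13SC 0 j k = if 1 ≤ j ∧ j ≤ 11 ∧ k = j + 1 then 1 else 0 := rfl

lemma f13SC_le1 {i j k : ℕ} (hk : k ≤ 1) : f13SC i j k = 0 := by
  rcases i with _|i
  · rw [f13SC_zeroleft, if_neg]; omega
  · exact f13SC_z (by omega) (by omega)

lemma f13SC_r0 (i k : ℕ) : f13SC i 0 k = 0 := by
  rcases i with _|_|_|_|_|_|i
  · rw [f13SC_zeroleft, if_neg]; omega
  all_goals rfl

lemma f13C_z {i j k : Fin 13} (hi : 1 ≤ (i:ℕ)) (hj : 1 ≤ (j:ℕ))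
    (hk : (k:ℕ) < (i:ℕ) + (j:ℕ) + 1) : f13C i j k = 0 := by
  unfold f13C
  rw [f13SC_z hi hk, f13SC_z hj (by omega), sub_zero]

lemma f13C_le1 {i j k : Fin 13} (hk : (k:ℕ) ≤ 1) : f13C i j k = 0 := by
  unfold f13C
  rw [f13SC_le1 hk, f13SC_le1 hk, sub_zero]

lemma f13C_0j (j k : Fin 13) :
    f13C 0 j k = if 1 ≤ (j:ℕ) ∧ (j:ℕ) ≤ 11 ∧ (k:ℕ) = (j:ℕ) + 1 then 1 else 0 := by
  unfold f13C
  have h0 : ((0 : Fin 13) : ℕ) = 0 := rfl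
  rw [h0, f13SC_r0, sub_zero, f13SC_zeroleft]

section Aux

variable {L : Type*} [LieRing L] [LieAlgebra ℂ L] (B : Module.Basis (Fin 13) ℂ L)
  (hB : ∀ i j : Fin 13, ⁅B i, B j⁆ = ∑ k : Fin 13, f13C i j k • B k) (b : ℂ)

/-- Span of the tail of the basis. -/
def Sp (m : ℕ) : Submodule ℂ L := Submodule.span ℂ (B '' {j : Fin 13 | m ≤ (j:ℕ)})

lemma Sp_mono {m m' : ℕ} (h : m ≤ m') : Sp B m' ≤ Sp B m :=
  Submodule.span_mono (Set.image_mono (fun j hj => le_trans h hj))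

lemma mem_Sp {j : Fin 13} {m : ℕ} (hj : m ≤ (j:ℕ)) : B j ∈ Sp B m :=
  Submodule.subset_span ⟨j, hj, rfl⟩

lemma val1 : ((1 : Fin 13) : ℕ) = 1 := rfl

include hB

lemma brkt_mem {i j : Fin 13} {m : ℕ}
    (h : ∀ k : Fin 13, (k:ℕ) < m → f13C i j k = 0) : ⁅B i, B j⁆ ∈ Sp B m := by
  rw [hB]
  refine Submodule.sum_mem _ fun k _ => ?_
  by_cases hk : (k:ℕ) < m
  · rw [h k hk, zero_smul]; exact zero_mem _
  · exact Submodule.smul_mem _ _ (mem_Sp B (by omega))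

lemma brkt_hi {i j : Fin 13} (hi : 1 ≤ (i:ℕ)) (hj : 1 ≤ (j:ℕ)) :
    ⁅B i, B j⁆ ∈ Sp B ((i:ℕ) + (j:ℕ) + 1) :=
  brkt_mem B hB (fun _ hk => f13C_z hi hj hk)

lemma gen_up {m : ℕ} (hm : 1 ≤ m) (i j : Fin 13) (hj : m ≤ (j:ℕ)) :
    ⁅B i, B j⁆ ∈ Sp B (m + 1) := by
  rcases Nat.eq_zero_or_pos (i:ℕ) with hi | hi
  · have h0 : i = 0 := Fin.ext (by rw [hi]; rfl)
    subst h0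
    exact brkt_mem B hB (fun k hk => by rw [f13C_0j, if_neg]; omega)
  · exact Sp_mono B (by omega) (brkt_hi B hB hi (by omega))


lemma brkt_e0 {j k : Fin 13} (h1 : 1 ≤ (j:ℕ)) (h11 : (j:ℕ) ≤ 11)
    (hk : (k:ℕ) = (j:ℕ) + 1) : ⁅B 0, B j⁆ = B k := by
  rw [hB]
  rw [Finset.sum_eq_single k]
  · rw [f13C_0j, if_pos ⟨h1, h11, hk⟩, one_smul]
  · intro k' _ hk'
    rw [f13C_0j, if_neg, zero_smul]
    rintro ⟨-, -, h⟩
    exact hk' (Fin.ext (by omega))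
  · intro h; exact absurd (Finset.mem_univ k) h

omit hB in
lemma bilin {s t : Set L} {T : Submodule ℂ L}
    (h : ∀ g ∈ s, ∀ v ∈ t, ⁅g, v⁆ ∈ T) :
    ∀ x ∈ Submodule.span ℂ s, ∀ y ∈ Submodule.span ℂ t, ⁅x, y⁆ ∈ T := by
  intro x hx y hy
  have hg : ∀ g ∈ s, ⁅g, y⁆ ∈ T := fun g hgs =>
    Submodule.span_induction (p := fun y _ => ⁅g, y⁆ ∈ T)
      (fun v hv => h g hgs v hv)
      (by simp)
      (fun y1 y2 _ _ h1 h2 => by show ⁅g, y1 + y2⁆ ∈ T; rw [lie_add]; exact add_mem h1 h2)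
      (fun c y1 _ h1 => by show ⁅g, c • y1⁆ ∈ T; rw [lie_smul]; exact Submodule.smul_mem _ _ h1) hy
  exact Submodule.span_induction (p := fun x _ => ⁅x, y⁆ ∈ T)
    hg
    (by simp)
    (fun x1 x2 _ _ h1 h2 => by show ⁅x1 + x2, y⁆ ∈ T; rw [add_lie]; exact add_mem h1 h2)
    (fun c x1 _ h1 => by show ⁅c • x1, y⁆ ∈ T; rw [smul_lie]; exact Submodule.smul_mem _ _ h1) hx

lemma br_all (x y : L) : ⁅x, y⁆ ∈ Sp B 2 := by
  refine bilin (s := Set.range B) (t := Set.range B) ?_ x ?_ y ?_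
  · rintro g ⟨i, rfl⟩ v ⟨j, rfl⟩
    exact brkt_mem B hB (fun k hk => f13C_le1 (by omega))
  · rw [B.span_eq]; trivial
  · rw [B.span_eq]; trivial

/-- The ideal `h_b`. -/
noncomputable def hbI : LieIdeal ℂ L :=
  { Submodule.span ℂ ({B 0 + b • B 1} ∪ B '' {j : Fin 13 | 2 ≤ (j : ℕ)}) with
    lie_mem := fun {x m} _ =>
      (Submodule.span_mono Set.subset_union_right : Sp B 2 ≤ _) (br_all B hB x m) }

lemma f1_brkt_mem {j : Fin 13} (hj : 2 ≤ (j:ℕ)) :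
    ⁅B 0 + b • B 1, B j⁆ ∈ Sp B 3 := by
  rw [add_lie, smul_lie]
  refine add_mem ?_ (Submodule.smul_mem _ _ ?_)
  · exact brkt_mem B hB (fun k hk => by rw [f13C_0j, if_neg]; omega)
  · refine Sp_mono B ?_ (brkt_hi B hB (i := 1) (by simp [val1]) (by omega))
    rw [val1]; omega

lemma base_pair :
    ∀ g ∈ ({B 0 + b • B 1} ∪ B '' {j : Fin 13 | 2 ≤ (j : ℕ)} : Set L),
    ∀ v ∈ ({B 0 + b • B 1} ∪ B '' {j : Fin 13 | 2 ≤ (j : ℕ)} : Set L),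
      ⁅g, v⁆ ∈ Sp B 3 := by
  rintro g (rfl | ⟨k, hk, rfl⟩) v (rfl | ⟨j, hj, rfl⟩)
  · rw [lie_self]; exact zero_mem _
  · exact f1_brkt_mem B hB b hj
  · rw [← lie_skew]
    exact neg_mem (f1_brkt_mem B hB b hk)
  · exact gen_up B hB (m := 2) (by omega) k j hj

lemma low {m : ℕ} (hm : 2 ≤ m) {T W : Submodule ℂ L} (hT : Sp B m ≤ T)
    (hW : ∀ x ∈ (hbI B hB b : Submodule ℂ L), ∀ n ∈ T, ⁅x, n⁆ ∈ W) :
    Sp B (m + 1) ≤ W := by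
  have hf1 : B 0 + b • B 1 ∈ (hbI B hB b : Submodule ℂ L) :=
    Submodule.subset_span (Set.mem_union_left _ rfl)
  have key : ∀ d : ℕ, ∀ j : Fin 13, 12 - (j:ℕ) ≤ d → m + 1 ≤ (j:ℕ) → B j ∈ W := by
    intro d
    induction d with
    | zero =>
      intro j h12 hmj
      have hj12 : (j:ℕ) = 12 := by omega
      set j' : Fin 13 := ⟨(j:ℕ) - 1, by omega⟩ with hj'
      have hv : (j':ℕ) = (j:ℕ) - 1 := rfl
      have h2 : ⁅B 0 + b • B 1, B j'⁆ = B j + b • ⁅B 1, B j'⁆ := by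
        rw [add_lie, smul_lie,
          brkt_e0 B hB (j := j') (k := j) (by rw [hv]; omega) (by rw [hv]; omega)
            (by rw [hv]; omega)]
      have h1 : ⁅B 0 + b • B 1, B j'⁆ ∈ W :=
        hW _ hf1 _ (hT (mem_Sp B (by rw [hv]; omega)))
      have h3 : ⁅B 1, B j'⁆ ∈ Sp B ((j:ℕ) + 1) := by
        have := brkt_hi B hB (i := 1) (j := j') (by simp [val1]) (by rw [hv]; omega)
        refine Sp_mono B ?_ this
        rw [val1, hv]; omega
      have h4 : Sp B ((j:ℕ) + 1) ≤ W := by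
        rw [Sp, Submodule.span_le]
        rintro _ ⟨j'', hj'', rfl⟩
        exact absurd (j''.isLt) (by simp only [Set.mem_setOf_eq] at hj''; omega)
      have : B j = ⁅B 0 + b • B 1, B j'⁆ - b • ⁅B 1, B j'⁆ := by
        rw [h2]; abel
      rw [this]
      exact sub_mem h1 (Submodule.smul_mem _ _ (h4 h3))
    | succ d ih =>
      intro j h12 hmj
      set j' : Fin 13 := ⟨(j:ℕ) - 1, by omega⟩ with hj'
      have hv : (j':ℕ) = (j:ℕ) - 1 := rfl
      have h2 : ⁅B 0 + b • B 1, B j'⁆ = B j + b • ⁅B 1, B j'⁆ := by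
        rw [add_lie, smul_lie,
          brkt_e0 B hB (j := j') (k := j) (by rw [hv]; omega) (by rw [hv]; omega)
            (by rw [hv]; omega)]
      have h1 : ⁅B 0 + b • B 1, B j'⁆ ∈ W :=
        hW _ hf1 _ (hT (mem_Sp B (by rw [hv]; omega)))
      have h3 : ⁅B 1, B j'⁆ ∈ Sp B ((j:ℕ) + 1) := by
        have := brkt_hi B hB (i := 1) (j := j') (by simp [val1]) (by rw [hv]; omega)
        refine Sp_mono B ?_ this
        rw [val1, hv]; omega
      have h4 : Sp B ((j:ℕ) + 1) ≤ W := by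
        rw [Sp, Submodule.span_le]
        rintro _ ⟨j'', hj'', rfl⟩
        simp only [Set.mem_setOf_eq] at hj''
        exact ih j'' (by omega) (by omega)
      have : B j = ⁅B 0 + b • B 1, B j'⁆ - b • ⁅B 1, B j'⁆ := by
        rw [h2]; abel
      rw [this]
      exact sub_mem h1 (Submodule.smul_mem _ _ (h4 h3))
  rw [Sp, Submodule.span_le]
  rintro _ ⟨j, hj, rfl⟩
  simp only [Set.mem_setOf_eq] at hj
  exact key 12 j (by omega) hj

omit hB in
lemma finrank_Sp (m : ℕ) :
    Module.finrank ℂ (Sp B m) = Fintype.card {j : Fin 13 // m ≤ (j:ℕ)} := by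
  have h : B '' {j : Fin 13 | m ≤ (j:ℕ)}
      = Set.range (fun j : {j : Fin 13 // m ≤ (j:ℕ)} => B j) := by
    ext x
    constructor
    · rintro ⟨j, hj, rfl⟩; exact ⟨⟨j, hj⟩, rfl⟩
    · rintro ⟨⟨j, hj⟩, rfl⟩; exact ⟨j, hj, rfl⟩
  rw [Sp, h]
  exact finrank_span_eq_card (B.linearIndependent.comp _ Subtype.coe_injective)

/-- A spanning family for `h_b`. -/
noncomputable def vfam : Fin 12 → L := fun j =>
  if j = 0 then B 0 + b • B 1 else B ⟨(j:ℕ)+1, by omega⟩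

/-- Index selection. -/
def gfam : Fin 12 → Fin 13 := fun j => if j = 0 then 0 else ⟨(j:ℕ)+1, by omega⟩

/-- Coordinate projection. -/
noncomputable def phi : L →ₗ[ℂ] (Fin 12 → ℂ) :=
  LinearMap.pi fun m => (Finsupp.lapply (gfam m)) ∘ₗ (B.repr : L →ₗ[ℂ] (Fin 13 →₀ ℂ))

omit hB in
lemma phi_apply (x : L) (m : Fin 12) : phi B x m = B.repr x (gfam m) := rfl

omit hB in
lemma comp_eq : ⇑(phi B) ∘ (vfam B b) = ⇑(Pi.basisFun ℂ (Fin 12)) := by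
  funext j
  ext m
  rw [Function.comp_apply, phi_apply, Pi.basisFun_apply]
  by_cases hj : j = 0
  · subst hj
    rw [vfam, if_pos rfl, map_add, map_smul, Module.Basis.repr_self, Module.Basis.repr_self,
      Finsupp.add_apply, Finsupp.smul_apply, Finsupp.single_apply, Finsupp.single_apply]
    by_cases hm : m = 0
    · subst hm
      rw [gfam, if_pos rfl, if_pos rfl, if_neg (by decide), Pi.single_eq_same]
      simp
    · rw [gfam, if_neg hm]
      have hm1 : 1 ≤ (m:ℕ) := Nat.pos_of_ne_zero (fun h => hm (Fin.ext h))
      rw [if_neg (fun h => by rw [Fin.ext_iff] at h; simp at h; try omega),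
        if_neg (fun h => by rw [Fin.ext_iff] at h; simp at h; try omega),
        Pi.single_eq_of_ne hm]
      simp
  · rw [vfam, if_neg hj, Module.Basis.repr_self, Finsupp.single_apply]
    have hj1 : 1 ≤ (j:ℕ) := Nat.pos_of_ne_zero (fun h => hj (Fin.ext h))
    by_cases hm : m = j
    · subst hm
      rw [gfam, if_neg hj, if_pos rfl, Pi.single_eq_same]
    · rw [Pi.single_eq_of_ne hm]
      by_cases hm0 : m = 0
      · subst hm0
        rw [gfam, if_pos rfl, if_neg (fun h => by rw [Fin.ext_iff] at h; simp at h; try omega)]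
      · have hm1 : 1 ≤ (m:ℕ) := Nat.pos_of_ne_zero (fun h => hm0 (Fin.ext h))
        have hv : (m:ℕ) ≠ (j:ℕ) := fun h => hm (Fin.ext h)
        rw [gfam, if_neg hm0, if_neg (fun h => by rw [Fin.ext_iff] at h; simp at h; try omega)]

omit hB in
lemma li_v : LinearIndependent ℂ (vfam B b) := by
  apply LinearIndependent.of_comp (phi B)
  rw [comp_eq]
  exact (Pi.basisFun ℂ (Fin 12)).linearIndependent

omit hB in
lemma range_v :
    Set.range (vfam B b) = {B 0 + b • B 1} ∪ B '' {j : Fin 13 | 2 ≤ (j:ℕ)} := by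
  ext x
  simp only [Set.mem_range, Set.mem_union, Set.mem_singleton_iff, Set.mem_image,
    Set.mem_setOf_eq]
  constructor
  · rintro ⟨j, rfl⟩
    by_cases hj : j = 0
    · subst hj; left; simp [vfam]
    · right
      have h1 : 1 ≤ (j:ℕ) := Nat.pos_of_ne_zero (fun h => hj (Fin.ext h))
      refine ⟨⟨(j:ℕ)+1, by omega⟩, by simpa using (by omega : 2 ≤ (j:ℕ)+1), ?_⟩
      simp [vfam, hj]
  · rintro (rfl | ⟨j, hj, rfl⟩)
    · exact ⟨0, by simp [vfam]⟩
    · have hne : (⟨(j:ℕ)-1, by omega⟩ : Fin 12) ≠ 0 := by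
        intro h
        have := congrArg Fin.val h
        simp at this
        omega
      refine ⟨⟨(j:ℕ)-1, by omega⟩, ?_⟩
      rw [vfam, if_neg hne]
      congr 1
      exact Fin.ext (by simp; omega)

omit hB in
lemma finrank_Isub :
    Module.finrank ℂ
      ↥(Submodule.span ℂ ({B 0 + b • B 1} ∪ B '' {j : Fin 13 | 2 ≤ (j:ℕ)})) = 12 := by
  rw [← range_v B b, finrank_span_eq_card (li_v B b), Fintype.card_fin]

lemma img_zero :
    (LieSubmodule.toSubmodule (LieModule.lowerCentralSeries ℂ (hbI B hB b) (hbI B hB b) 0)).map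
        ((hbI B hB b : Submodule ℂ L).subtype)
      = (hbI B hB b : Submodule ℂ L) := by
  rw [LieModule.lowerCentralSeries_zero, LieSubmodule.top_toSubmodule]
  erw [Submodule.map_top,
    Submodule.range_subtype]

lemma img_succ (n : ℕ) :
    (LieSubmodule.toSubmodule (LieModule.lowerCentralSeries ℂ (hbI B hB b) (hbI B hB b) (n+1))).map
        ((hbI B hB b : Submodule ℂ L).subtype)
      = Submodule.span ℂ {z : L | ∃ x ∈ (hbI B hB b : Submodule ℂ L),
          ∃ m ∈ (LieSubmodule.toSubmodule
              (LieModule.lowerCentralSeries ℂ (hbI B hB b) (hbI B hB b) n)).map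
            ((hbI B hB b : Submodule ℂ L).subtype), ⁅x, m⁆ = z} := by
  rw [LieModule.lowerCentralSeries_succ, LieSubmodule.lieIdeal_oper_eq_linear_span']
  erw [Submodule.map_span]
  congr 1
  ext z
  constructor
  · rintro ⟨m, ⟨x, -, nn, hnn, rfl⟩, rfl⟩
    exact ⟨(x:L), x.2, (nn:L), ⟨nn, hnn, rfl⟩, rfl⟩
  · rintro ⟨x, hx, -, ⟨nn, hnn, rfl⟩, rfl⟩
    exact ⟨@id (↥(hbI B hB b)) ⁅(⟨x, hx⟩ : ↥(hbI B hB b)), (@id (↥(hbI B hB b)) nn)⁆, ⟨⟨x, hx⟩, trivial, nn, hnn, rfl⟩, rfl⟩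

lemma img_eq (n : ℕ) :
    (LieSubmodule.toSubmodule (LieModule.lowerCentralSeries ℂ (hbI B hB b) (hbI B hB b) (n+1))).map
        ((hbI B hB b : Submodule ℂ L).subtype)
      = Sp B (n+3) := by
  induction n with
  | zero =>
    rw [img_succ, img_zero]
    apply le_antisymm
    · rw [Submodule.span_le]
      rintro z ⟨x, hx, y, hy, rfl⟩
      exact bilin (base_pair B hB b) x hx y hy
    · exact low B hB b (m := 2) le_rfl (Submodule.span_mono Set.subset_union_right)
        (fun x hx nn hn => Submodule.subset_span ⟨x, hx, nn, hn, rfl⟩)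
  | succ n ih =>
    rw [img_succ, ih]
    apply le_antisymm
    · rw [Submodule.span_le]
      rintro z ⟨x, hx, y, hy, rfl⟩
      have hy' : y ∈ Submodule.span ℂ (B '' {j : Fin 13 | n+3 ≤ (j:ℕ)}) := hy
      have hx' : x ∈ Submodule.span ℂ (Set.range ⇑B) := by rw [B.span_eq]; trivial
      refine bilin ?_ x hx' y hy'
      rintro g ⟨i, rfl⟩ v ⟨j, hj, rfl⟩
      exact gen_up B hB (m := n+3) (by omega) i j hj
    · exact low B hB b (m := n+3) (by omega) le_rfl
        (fun x hx nn hn => Submodule.subset_span ⟨x, hx, nn, hn, rfl⟩)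

end Aux

/-- For every `b ∈ ℂ`, the subspace `h_b = ⟨e_0 + b e_1, e_2, …, e_12⟩` of `f₁₃` is an
ideal of codimension 1, and it is filiform: the terms of its lower central series satisfy
`dim h_b^i = 11 - i` for `1 ≤ i ≤ 11`. -/
theorem f13_hb_ideal_filiform
    (L : Type*) [LieRing L] [LieAlgebra ℂ L]
    (B : Module.Basis (Fin 13) ℂ L)
    (hB : ∀ i j : Fin 13, ⁅B i, B j⁆ = ∑ k : Fin 13, f13C i j k • B k)
    (b : ℂ) :
    ∃ I : LieIdeal ℂ L,
      (I : Submodule ℂ L)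
        = Submodule.span ℂ ({B 0 + b • B 1} ∪ B '' {j : Fin 13 | 2 ≤ (j : ℕ)}) ∧
      Module.finrank ℂ I = 12 ∧
      ∀ i : ℕ, 1 ≤ i → i ≤ 11 →
        Module.finrank ℂ (LieModule.lowerCentralSeries ℂ I I i) = 11 - i := by
  refine ⟨hbI B hB b, rfl, finrank_Isub B b, ?_⟩
  intro i hi1 hi11
  obtain ⟨n, rfl⟩ : ∃ n, i = n + 1 := ⟨i - 1, by omega⟩
  have he : Module.finrank ℂ
      (LieModule.lowerCentralSeries ℂ (hbI B hB b) (hbI B hB b) (n+1))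
      = Module.finrank ℂ
        ((LieSubmodule.toSubmodule
            (LieModule.lowerCentralSeries ℂ (hbI B hB b) (hbI B hB b) (n+1))).map
          ((hbI B hB b : Submodule ℂ L).subtype)) :=
    (Submodule.equivMapOfInjective _ (Submodule.injective_subtype _) _).finrank_eq
  rw [img_eq B hB b n] at he
  rw [he, finrank_Sp]
  have hn : n ≤ 10 := by omega
  interval_cases n <;> decide
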